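/- arXiv:1111.0986 — 2 statements merged into one kernel-verified Lean document; each statement's English description precedes it below -/
import Mathlib

section
/- For every integer m ≥ 1, the sum ∑_{j=1}^{m-1} C_{j+1}(C_{m-j+1} - C_{m-j}) + ∑_{j=2}^{m} (C_{j+1} - C_j) C_{m-j+1} equals 3(3m+4)(m-1)(2m+2)! / ((m+1)!(m+4)!), where C_n is the n-th Catalan number. -/
/-- `w` is an alternating (up-down) permutation: `w 0 < w 1 > w 2 < ⋯`. -/
def UpDown {n : ℕ} (w : Equiv.Perm (Fin n)) : Prop :=
  ∀ i : ℕ, ∀ h : i + 1 < n,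
    if i % 2 = 0 then w ⟨i, Nat.lt_of_succ_lt h⟩ < w ⟨i + 1, h⟩
    else w ⟨i + 1, h⟩ < w ⟨i, Nat.lt_of_succ_lt h⟩

/-- `w` is a reverse-alternating (down-up) permutation: `w 0 > w 1 < w 2 > ⋯`. -/
def DownUp {n : ℕ} (w : Equiv.Perm (Fin n)) : Prop :=
  ∀ i : ℕ, ∀ h : i + 1 < n,
    if i % 2 = 0 then w ⟨i + 1, h⟩ < w ⟨i, Nat.lt_of_succ_lt h⟩
    else w ⟨i, Nat.lt_of_succ_lt h⟩ < w ⟨i + 1, h⟩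

/-- The set of occurrences of the pattern 321 in `w`. -/
def occ321 {n : ℕ} (w : Equiv.Perm (Fin n)) : Set (Fin n × Fin n × Fin n) :=
  {t | t.1 < t.2.1 ∧ t.2.1 < t.2.2 ∧ w t.2.2 < w t.2.1 ∧ w t.2.1 < w t.1}

/-- The set of occurrences of the pattern 123 in `w`. -/
def occ123 {n : ℕ} (w : Equiv.Perm (Fin n)) : Set (Fin n × Fin n × Fin n) :=
  {t | t.1 < t.2.1 ∧ t.2.1 < t.2.2 ∧ w t.1 < w t.2.1 ∧ w t.2.1 < w t.2.2}

open Finset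
lemma conv (n : ℕ) : ∑ i ∈ range (n + 1), catalan i * catalan (n - i) = catalan (n + 1) := by
  rw [catalan_succ]
  exact (Fin.sum_univ_eq_sum_range (fun i => catalan i * catalan (n - i)) (n + 1)).symm

lemma keyA (k : ℕ) :
    ∑ i ∈ range (k + 1), catalan (i + 2) * catalan (k + 2 - i)
      + 2 * catalan (k + 3) + 2 * catalan (k + 4) = catalan (k + 5) := by
  have h := conv (k + 4)
  rw [sum_range_succ', sum_range_succ'] at h
  rw [show k + 3 = (k + 1) + 2 by ring] at h
  rw [sum_range_succ, sum_range_succ] at h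
  have e1 : ∀ i : ℕ, k + 4 - (i + 1 + 1) = k + 2 - i := fun i => by omega
  simp only [e1] at h
  simp only [show k + 2 - (k + 1) = 1 by omega, show k + 2 - k = 2 by omega,
    show k + 4 - 1 = k + 3 by omega, show k + 4 - 0 = k + 4 by omega,
    show k + 2 - (k + 1 + 1) = 0 by omega,
    catalan_zero, catalan_one, mul_one, one_mul,
    show ∀ x:ℕ, x+1+1 = x+2 from fun _ => by omega, Nat.zero_add] at h
  linarith [h]

lemma keyB (k : ℕ) :
    ∑ i ∈ range (k + 1), catalan (i + 2) * catalan (k + 1 - i)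
      + 2 * catalan (k + 3) + catalan (k + 2) = catalan (k + 4) := by
  have h := conv (k + 3)
  rw [sum_range_succ', sum_range_succ'] at h
  rw [show k + 2 = (k + 1) + 1 by ring] at h
  rw [sum_range_succ] at h
  have e1 : ∀ i : ℕ, k + 3 - (i + 1 + 1) = k + 1 - i := fun i => by omega
  simp only [e1] at h
  simp only [show k + 1 - (k + 1) = 0 by omega, show k + 3 - 1 = k + 2 by omega,
    show k + 3 - 0 = k + 3 by omega, catalan_zero, catalan_one, mul_one, one_mul,
    show ∀ x:ℕ, x+1+1 = x+2 from fun _ => by omega, Nat.zero_add] at h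
  linarith [h]

lemma keyC (k : ℕ) :
    ∑ i ∈ range (k + 1), catalan (i + 3) * catalan (k + 1 - i)
      + 2 * catalan (k + 4) + catalan (k + 3) + 2 * catalan (k + 2) = catalan (k + 5) := by
  have h := conv (k + 4)
  rw [sum_range_succ', sum_range_succ', sum_range_succ'] at h
  rw [show k + 2 = (k + 1) + 1 by ring] at h
  rw [sum_range_succ] at h
  have e1 : ∀ i : ℕ, k + 4 - (i + 1 + 1 + 1) = k + 1 - i := fun i => by omega
  simp only [e1] at h
  simp only [show k + 1 - (k + 1) = 0 by omega, show k + 4 - 2 = k + 2 by omega,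
    show k + 4 - 1 = k + 3 by omega, show k + 4 - 0 = k + 4 by omega,
    show (1:ℕ) + 1 = 2 by rfl, show (0:ℕ) + 1 + 1 = 2 by rfl,
    catalan_zero, catalan_one, catalan_two, mul_one, one_mul,
    show ∀ x:ℕ, x+1+1+1 = x+3 from fun _ => by omega, Nat.zero_add] at h
  linarith [h]


lemma cat_mono (n : ℕ) : catalan n ≤ catalan (n + 1) := by
  rw [catalan_succ']
  calc catalan n = catalan (n, 0).1 * catalan (n, 0).2 := by simp
  _ ≤ _ := Finset.single_le_sum (f := fun p : ℕ × ℕ => catalan p.1 * catalan p.2)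
      (fun i _ => Nat.zero_le _) (by simp)

lemma cat_fact (n : ℕ) :
    catalan n * ((n + 1).factorial * n.factorial) = (2 * n).factorial := by
  have h1 := succ_mul_catalan_eq_centralBinom n
  have h2 : (2 * n).choose n * n.factorial * (2 * n - n).factorial = (2 * n).factorial :=
    Nat.choose_mul_factorial_mul_factorial (by omega)
  have h3 : 2 * n - n = n := by omega
  rw [h3] at h2
  have hcb : Nat.centralBinom n = (2 * n).choose n := rfl
  rw [Nat.factorial_succ]
  calc catalan n * ((n + 1) * n.factorial * n.factorial)
      = (n + 1) * catalan n * n.factorial * n.factorial := by ring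
    _ = (2 * n).factorial := by rw [h1, hcb, h2]

lemma catq (n : ℕ) :
    (catalan n : ℚ) = (2 * n).factorial / ((n + 1).factorial * n.factorial) := by
  rw [eq_div_iff (by positivity)]
  exact_mod_cast cat_fact n

lemma final (k : ℕ) :
    (2 * (catalan (k + 5) : ℚ) + catalan (k + 3) - 6 * catalan (k + 4)) *
        ((k + 3).factorial * (k + 6).factorial)
      = 3 * (3 * k + 10) * (k + 1) * (2 * k + 6).factorial := by
  have e4 : ((k + 4).factorial : ℚ) = (k + 4) * (k + 3).factorial := by
    rw [show k + 4 = (k + 3) + 1 by omega, Nat.factorial_succ]; push_cast; ring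
  have e5 : ((k + 5).factorial : ℚ) = (k + 5) * (k + 4) * (k + 3).factorial := by
    rw [show k + 5 = (k + 4) + 1 by omega, Nat.factorial_succ]; push_cast [e4]; ring
  have e6 : ((k + 6).factorial : ℚ) = (k + 6) * (k + 5) * (k + 4) * (k + 3).factorial := by
    rw [show k + 6 = (k + 5) + 1 by omega, Nat.factorial_succ]; push_cast [e5]; ring
  have g8 : ((2 * k + 8).factorial : ℚ) = (2 * k + 8) * (2 * k + 7) * (2 * k + 6).factorial := by
    rw [show 2 * k + 8 = (2 * k + 7) + 1 by omega, Nat.factorial_succ,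
      show 2 * k + 7 = (2 * k + 6) + 1 by omega, Nat.factorial_succ]; push_cast; ring
  have g10 : ((2 * k + 10).factorial : ℚ)
      = (2 * k + 10) * (2 * k + 9) * (2 * k + 8) * (2 * k + 7) * (2 * k + 6).factorial := by
    rw [show 2 * k + 10 = (2 * k + 9) + 1 by omega, Nat.factorial_succ,
      show 2 * k + 9 = (2 * k + 8) + 1 by omega, Nat.factorial_succ]; push_cast [g8]; ring
  have hc3 := catq (k + 3)
  have hc4 := catq (k + 4)
  have hc5 := catq (k + 5)
  rw [show 2 * (k + 3) = 2 * k + 6 by omega, show k + 3 + 1 = k + 4 by omega] at hc3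
  rw [show 2 * (k + 4) = 2 * k + 8 by omega, show k + 4 + 1 = k + 5 by omega] at hc4
  rw [show 2 * (k + 5) = 2 * k + 10 by omega, show k + 5 + 1 = k + 6 by omega] at hc5
  rw [hc3, hc4, hc5, g8, g10, e4, e5, e6]
  have h1 : ((k + 3).factorial : ℚ) ≠ 0 := by positivity
  have h2 : ((2 * k + 6).factorial : ℚ) ≠ 0 := by positivity
  field_simp
  ring

lemma keySum (k : ℕ)
    (hA : ∑ i ∈ range (k + 1), catalan (i + 2) * catalan (k + 2 - i)
      + 2 * catalan (k + 3) + 2 * catalan (k + 4) = catalan (k + 5))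
    (hB : ∑ i ∈ range (k + 1), catalan (i + 2) * catalan (k + 1 - i)
      + 2 * catalan (k + 3) + catalan (k + 2) = catalan (k + 4))
    (hC : ∑ i ∈ range (k + 1), catalan (i + 3) * catalan (k + 1 - i)
      + 2 * catalan (k + 4) + catalan (k + 3) + 2 * catalan (k + 2) = catalan (k + 5)) :
    ((∑ i ∈ range (k + 1), catalan (i + 2) * (catalan (k + 2 - i) - catalan (k + 1 - i)) : ℕ) : ℚ)
      + ((∑ i ∈ range (k + 1), (catalan (i + 3) - catalan (i + 2)) * catalan (k + 1 - i) : ℕ) : ℚ)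
      = 2 * catalan (k + 5) + catalan (k + 3) - 6 * catalan (k + 4) := by
  have hT1 : ((∑ i ∈ range (k + 1), catalan (i + 2) * (catalan (k + 2 - i) - catalan (k + 1 - i)) : ℕ) : ℚ)
      = ((∑ i ∈ range (k + 1), catalan (i + 2) * catalan (k + 2 - i) : ℕ) : ℚ)
        - ((∑ i ∈ range (k + 1), catalan (i + 2) * catalan (k + 1 - i) : ℕ) : ℚ) := by
    push_cast
    rw [← Finset.sum_sub_distrib]
    refine Finset.sum_congr rfl fun i hi => ?_
    have hi' : i ≤ k := Nat.lt_succ_iff.mp (Finset.mem_range.mp hi)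
    have hle : catalan (k + 1 - i) ≤ catalan (k + 2 - i) := by
      have h := cat_mono (k + 1 - i)
      rwa [show k + 1 - i + 1 = k + 2 - i by omega] at h
    rw [Nat.cast_sub hle]; ring
  have hT2 : ((∑ i ∈ range (k + 1), (catalan (i + 3) - catalan (i + 2)) * catalan (k + 1 - i) : ℕ) : ℚ)
      = ((∑ i ∈ range (k + 1), catalan (i + 3) * catalan (k + 1 - i) : ℕ) : ℚ)
        - ((∑ i ∈ range (k + 1), catalan (i + 2) * catalan (k + 1 - i) : ℕ) : ℚ) := by
    push_cast
    rw [← Finset.sum_sub_distrib]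
    refine Finset.sum_congr rfl fun i hi => ?_
    have hle : catalan (i + 2) ≤ catalan (i + 3) := cat_mono (i + 2)
    rw [Nat.cast_sub hle]; ring
  rw [hT1, hT2]
  have hA' : ((∑ i ∈ range (k + 1), catalan (i + 2) * catalan (k + 2 - i) : ℕ) : ℚ)
      + 2 * catalan (k + 3) + 2 * catalan (k + 4) = catalan (k + 5) := by exact_mod_cast hA
  have hB' : ((∑ i ∈ range (k + 1), catalan (i + 2) * catalan (k + 1 - i) : ℕ) : ℚ)
      + 2 * catalan (k + 3) + catalan (k + 2) = catalan (k + 4) := by exact_mod_cast hB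
  have hC' : ((∑ i ∈ range (k + 1), catalan (i + 3) * catalan (k + 1 - i) : ℕ) : ℚ)
      + 2 * catalan (k + 4) + catalan (k + 3) + 2 * catalan (k + 2) = catalan (k + 5) := by
    exact_mod_cast hC
  linarith [hA', hB', hC']


theorem stmt1 (m : ℕ) (hm : 1 ≤ m) :
    ((∑ j ∈ Finset.Icc 1 (m - 1), catalan (j + 1) * (catalan (m - j + 1) - catalan (m - j))) +
        ∑ j ∈ Finset.Icc 2 m, (catalan (j + 1) - catalan j) * catalan (m - j + 1)) *
        (Nat.factorial (m + 1) * Nat.factorial (m + 4)) =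
      3 * (3 * m + 4) * (m - 1) * Nat.factorial (2 * m + 2) := by
  rcases Nat.lt_or_ge m 2 with h2 | h2
  · have hm1 : m = 1 := by omega
    subst hm1
    simp
  · obtain ⟨k, rfl⟩ : ∃ k, m = k + 2 := ⟨m - 2, by omega⟩
    have hS1 : ∑ j ∈ Finset.Icc 1 (k + 2 - 1),
          catalan (j + 1) * (catalan (k + 2 - j + 1) - catalan (k + 2 - j))
        = ∑ i ∈ range (k + 1), catalan (i + 2) * (catalan (k + 2 - i) - catalan (k + 1 - i)) := by
      rw [show k + 2 - 1 = k + 1 by omega, ← Finset.Ico_add_one_right_eq_Icc, Finset.sum_Ico_eq_sum_range]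
      rw [show k + 1 + 1 - 1 = k + 1 by omega]
      refine Finset.sum_congr rfl fun i hi => ?_
      have hi' : i ≤ k := Nat.lt_succ_iff.mp (Finset.mem_range.mp hi)
      rw [show 1 + i + 1 = i + 2 by omega, show k + 2 - (1 + i) + 1 = k + 2 - i by omega,
        show k + 2 - (1 + i) = k + 1 - i by omega]
    have hS2 : ∑ j ∈ Finset.Icc 2 (k + 2), (catalan (j + 1) - catalan j) * catalan (k + 2 - j + 1)
        = ∑ i ∈ range (k + 1), (catalan (i + 3) - catalan (i + 2)) * catalan (k + 1 - i) := by
      rw [← Finset.Ico_add_one_right_eq_Icc, Finset.sum_Ico_eq_sum_range]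
      rw [show k + 2 + 1 - 2 = k + 1 by omega]
      refine Finset.sum_congr rfl fun i hi => ?_
      have hi' : i ≤ k := Nat.lt_succ_iff.mp (Finset.mem_range.mp hi)
      rw [show 2 + i + 1 = i + 3 by omega, show 2 + i = i + 2 by omega,
        show k + 2 - (i + 2) + 1 = k + 1 - i by omega]
    rw [hS1, hS2, show k + 2 - 1 = k + 1 by omega, show k + 2 + 1 = k + 3 by omega,
      show k + 2 + 4 = k + 6 by omega, show 2 * (k + 2) + 2 = 2 * k + 6 by omega]
    have key := keySum k (keyA k) (keyB k) (keyC k)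
    rw [← Nat.cast_inj (R := ℚ), Nat.cast_mul, Nat.cast_mul, Nat.cast_add, key, final k]
    push_cast
    ring
end

section
/- For every ℓ ≥ 1, the number of 321-avoiding alternating (up-down) permutations of length 2ℓ+1 that begin with their smallest entry is the Catalan number C_ℓ. -/
section Aux
open Finset DyckStep

lemma count_take_ofFn {n : ℕ} (f : Fin n → DyckStep) (s : DyckStep) :
    ∀ m : ℕ, m ≤ n →
    ((List.ofFn f).take m).count s
      = (univ.filter (fun j : Fin n => j.val < m ∧ f j = s)).card := by
  intro m
  induction m with
  | zero =>
    intro _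
    simp
  | succ m ih =>
    intro hm
    have hmn : m < n := hm
    rw [List.take_succ, List.count_append, ih (le_of_lt hmn)]
    have hget : (List.ofFn f)[m]? = some (f ⟨m, hmn⟩) := by
      simp [List.getElem?_ofFn, hmn]
    rw [hget]
    by_cases hs : f ⟨m, hmn⟩ = s
    · have hins : (univ.filter (fun j : Fin n => j.val < m + 1 ∧ f j = s))
          = insert ⟨m, hmn⟩ (univ.filter (fun j : Fin n => j.val < m ∧ f j = s)) := by
        ext x
        simp only [mem_filter, mem_univ, true_and, mem_insert]
        constructor
        · rintro ⟨hx1, hx2⟩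
          rcases Nat.lt_succ_iff_lt_or_eq.1 hx1 with h | h
          · exact Or.inr ⟨h, hx2⟩
          · exact Or.inl (Fin.ext h)
        · rintro (rfl | ⟨hx1, hx2⟩)
          · exact ⟨Nat.lt_succ_self m, hs⟩
          · exact ⟨Nat.lt_succ_of_lt hx1, hx2⟩
      rw [hins, Finset.card_insert_of_notMem (by simp)]
      simp only [Option.toList_some, List.count_singleton']
      simp [hs]
    · have hins : (univ.filter (fun j : Fin n => j.val < m + 1 ∧ f j = s))
          = univ.filter (fun j : Fin n => j.val < m ∧ f j = s) := by
        ext x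
        simp only [mem_filter, mem_univ, true_and]
        constructor
        · rintro ⟨hx1, hx2⟩
          rcases Nat.lt_succ_iff_lt_or_eq.1 hx1 with h | h
          · exact ⟨h, hx2⟩
          · exact absurd hx2 (by rw [show x = ⟨m, hmn⟩ from Fin.ext h]; exact hs)
        · rintro ⟨hx1, hx2⟩
          exact ⟨Nat.lt_succ_of_lt hx1, hx2⟩
      rw [hins]
      simp only [Option.toList_some, List.count_singleton']
      simp [hs]

/-- The word associated to a function on `Fin (2*l+1)`. -/
def wordOf {l : ℕ} (e : Fin (2*l+1) → DyckStep) : List DyckStep :=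
  List.ofFn (fun i : Fin (2*l) => e i.succ)

lemma length_wordOf {l : ℕ} (e : Fin (2*l+1) → DyckStep) : (wordOf e).length = 2*l :=
  List.length_ofFn

lemma count_wordOf {l : ℕ} (e : Fin (2*l+1) → DyckStep) (s : DyckStep) (m : ℕ) (hm : m ≤ 2*l) :
    ((wordOf e).take m).count s
      = (univ.filter (fun k : Fin (2*l+1) => 0 < k.val ∧ k.val ≤ m ∧ e k = s)).card := by
  rw [wordOf, count_take_ofFn _ _ m hm]
  refine Finset.card_bij (fun j _ => j.succ) ?_ ?_ ?_
  · intro a ha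
    simp only [mem_filter, mem_univ, true_and, Fin.val_succ] at ha ⊢
    exact ⟨Nat.succ_pos _, by omega, ha.2⟩
  · intro a _ b _ hab
    exact Fin.succ_injective _ hab
  · intro b hb
    simp only [mem_filter, mem_univ, true_and] at hb
    obtain ⟨hb0, hbm, hbs⟩ := hb
    refine ⟨⟨b.val - 1, by omega⟩, ?_, ?_⟩
    · simp only [mem_filter, mem_univ, true_and]
      constructor
      · omega
      · convert hbs using 2
        ext
        simp [Fin.succ]
        omega
    · ext
      simp [Fin.succ]
      omega

def IsBallot {l : ℕ} (P : Finset (Fin (2*l+1))) : Prop :=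
  P.card = l ∧ ∀ k : Fin (2*l+1), (P.filter (· ≤ k)).card < (Pᶜ.filter (· ≤ k)).card

lemma IsBallot.zero_not_mem {l : ℕ} {P : Finset (Fin (2*l+1))} (h : IsBallot P) :
    (0 : Fin (2*l+1)) ∉ P := by
  intro h0
  have hb := h.2 0
  have he : Pᶜ.filter (· ≤ (0 : Fin (2*l+1))) = ∅ := by
    ext x
    simp only [mem_filter, Finset.notMem_empty, iff_false, not_and, Finset.mem_compl]
    intro hx hx0
    exact hx (by rwa [Fin.le_zero_iff.1 hx0])
  rw [he, Finset.card_empty] at hb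
  omega

/-- step function of a peak set -/
def eP {l : ℕ} (P : Finset (Fin (2*l+1))) : Fin (2*l+1) → DyckStep :=
  fun k => if k ∈ P then D else U

lemma filter_le_val {l : ℕ} (s : Finset (Fin (2*l+1))) (k : Fin (2*l+1)) :
    s.filter (· ≤ k) = s.filter (fun x => x.val ≤ k.val) := by
  apply Finset.filter_congr
  intro x _
  exact Iff.rfl

lemma countD_eq {l : ℕ} (P : Finset (Fin (2*l+1))) (h0 : (0 : Fin (2*l+1)) ∉ P) (m : ℕ) :
    (univ.filter (fun k : Fin (2*l+1) => 0 < k.val ∧ k.val ≤ m ∧ eP P k = D)).card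
      = (P.filter (fun x => x.val ≤ m)).card := by
  congr 1
  ext x
  simp only [mem_filter, mem_univ, true_and]; simp only [eP]
  constructor
  · rintro ⟨-, hm, hD⟩
    by_cases hx : x ∈ P
    · exact ⟨hx, hm⟩
    · simp [hx] at hD
  · rintro ⟨hx, hm⟩
    have : x ≠ 0 := by rintro rfl; exact h0 hx
    refine ⟨?_, hm, by simp [hx]⟩
    have hv : x.val ≠ 0 := fun h => this (Fin.ext_iff.mpr (by simp [h]))
    omega

lemma countU_eq {l : ℕ} (P : Finset (Fin (2*l+1))) (h0 : (0 : Fin (2*l+1)) ∉ P) (m : ℕ) :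
    (univ.filter (fun k : Fin (2*l+1) => 0 < k.val ∧ k.val ≤ m ∧ eP P k = U)).card + 1
      = (Pᶜ.filter (fun x => x.val ≤ m)).card := by
  have : Pᶜ.filter (fun x => x.val ≤ m)
      = insert 0 (univ.filter (fun k : Fin (2*l+1) => 0 < k.val ∧ k.val ≤ m ∧ eP P k = U)) := by
    ext x
    simp only [mem_filter, mem_univ, true_and, mem_insert, Finset.mem_compl]; simp only [eP]
    constructor
    · rintro ⟨hx, hm⟩
      by_cases hx0 : x = 0
      · exact Or.inl hx0
      · refine Or.inr ⟨?_, hm, by simp [hx]⟩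
        have hv : x.val ≠ 0 := fun h => hx0 (Fin.ext_iff.mpr (by simp [h]))
        omega
    · rintro (rfl | ⟨-, hm, hU⟩)
      · exact ⟨h0, by simp⟩
      · refine ⟨fun hx => ?_, hm⟩
        · simp [hx] at hU
  rw [this, Finset.card_insert_of_notMem (by simp)]

def toDyck {l : ℕ} (P : Finset (Fin (2*l+1))) (hP : IsBallot P) : DyckWord where
  toList := wordOf (eP P)
  count_U_eq_count_D := by
    have h0 := hP.zero_not_mem
    have htake : (wordOf (eP P)).take (2*l) = wordOf (eP P) := by
      rw [← length_wordOf (eP P)]; exact List.take_length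
    have hU := count_wordOf (eP P) U (2*l) le_rfl
    have hD := count_wordOf (eP P) D (2*l) le_rfl
    rw [htake] at hU hD
    have hfu : ∀ (s : Finset (Fin (2*l+1))), s.filter (fun x => x.val ≤ 2*l) = s := by
      intro s
      apply Finset.filter_true_of_mem
      intro x _
      omega
    have hcU := countU_eq P h0 (2*l)
    have hcD := countD_eq P h0 (2*l)
    rw [hfu] at hcU hcD
    have hPc : Pᶜ.card = l + 1 := by
      rw [Finset.card_compl, hP.1]
      simp only [Fintype.card_fin]
      omega
    have h1 := hP.1
    omega
  count_D_le_count_U i := by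
    have h0 := hP.zero_not_mem
    rcases le_or_gt i (2*l) with hi | hi
    · have hU := count_wordOf (eP P) U i hi
      have hD := count_wordOf (eP P) D i hi
      have hb := hP.2 ⟨i, by omega⟩
      rw [filter_le_val, filter_le_val] at hb
      have hcU := countU_eq P h0 i
      have hcD := countD_eq P h0 i
      simp only [] at hb hU hD hcU hcD ⊢
      omega
    · have htake : (wordOf (eP P)).take i = wordOf (eP P) := by
        apply List.take_of_length_le
        rw [length_wordOf]; omega
      rw [htake]
      have htake2 : (wordOf (eP P)).take (2*l) = wordOf (eP P) := by
        rw [← length_wordOf (eP P)]; exact List.take_length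
      have hU := count_wordOf (eP P) U (2*l) le_rfl
      have hD := count_wordOf (eP P) D (2*l) le_rfl
      rw [htake2] at hU hD
      have hfu : ∀ (s : Finset (Fin (2*l+1))), s.filter (fun x => x.val ≤ 2*l) = s := by
        intro s
        apply Finset.filter_true_of_mem
        intro x _
        omega
      have hcU := countU_eq P h0 (2*l)
      have hcD := countD_eq P h0 (2*l)
      rw [hfu] at hcU hcD
      have hPc : Pᶜ.card = l + 1 := by
        rw [Finset.card_compl, hP.1]
        simp only [Fintype.card_fin]
        omega
      have h1 := hP.1
      omega

lemma semilength_toDyck {l : ℕ} (P : Finset (Fin (2*l+1))) (hP : IsBallot P) :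
    (toDyck P hP).semilength = l := by
  have := (toDyck P hP).count_U_eq_count_D
  have hlen : (toDyck P hP).toList.length = 2*l := length_wordOf _
  have h2 := (toDyck P hP).two_mul_semilength_eq_length
  omega

lemma toDyck_injective {l : ℕ} (P P' : Finset (Fin (2*l+1))) (hP : IsBallot P)
    (hP' : IsBallot P') (h : toDyck P hP = toDyck P' hP') : P = P' := by
  have hw : wordOf (eP P) = wordOf (eP P') := congrArg DyckWord.toList h
  rw [wordOf, wordOf, List.ofFn_inj] at hw
  have key : ∀ k : Fin (2*l+1), eP P k = eP P' k := by
    intro k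
    by_cases hk : k.val = 0
    · have hk0 : k = 0 := Fin.ext_iff.mpr (by simp [hk])
      subst hk0
      simp [eP, hP.zero_not_mem, hP'.zero_not_mem]
    · have hkl : k.val - 1 < 2*l := by omega
      have : (⟨k.val - 1, hkl⟩ : Fin (2*l)).succ = k := by
        ext
        simp [Fin.succ]
        omega
      rw [← this]
      exact congrFun hw _
  ext k
  have := key k
  simp only [eP] at this
  by_cases h1 : k ∈ P <;> by_cases h2 : k ∈ P' <;> simp [h1, h2] at this ⊢

lemma toDyck_surjective {l : ℕ} (q : DyckWord) (hq : q.semilength = l) :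
    ∃ P : Finset (Fin (2*l+1)), ∃ hP : IsBallot P, toDyck P hP = q := by
  have hlen : q.toList.length = 2*l := by
    have := q.two_mul_semilength_eq_length
    omega
  set e : Fin (2*l+1) → DyckStep :=
    fun k => if h : k.val = 0 then U else q.toList[k.val - 1]'(by omega) with he
  set P : Finset (Fin (2*l+1)) := univ.filter (fun k => e k = D) with hPdef
  have h0 : (0 : Fin (2*l+1)) ∉ P := by simp [hPdef, he]
  have hee : eP P = e := by
    funext k
    rcases (e k).dichotomy with h | h
    · have : k ∉ P := by simp [hPdef, h]
      simp [eP, this, h]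
    · have : k ∈ P := by simp [hPdef, h]
      simp [eP, this, h]
  have hword : wordOf e = q.toList := by
    apply List.ext_getElem
    · rw [wordOf, List.length_ofFn, hlen]
    · intro i h1 h2
      simp only [wordOf, List.getElem_ofFn]
      simp only [he, Fin.val_succ]
      simp
  -- cardinality
  have hcount : q.toList.count D = P.card := by
    have h1 := count_wordOf e D (2*l) le_rfl
    have htake : (wordOf e).take (2*l) = wordOf e := by
      rw [← length_wordOf e]; exact List.take_length
    rw [htake, hword] at h1
    have h2 := countD_eq P h0 (2*l)
    rw [hee] at h2
    have hfu : P.filter (fun x => x.val ≤ 2*l) = P := by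
      apply Finset.filter_true_of_mem; intro x _; omega
    rw [hfu] at h2
    omega
  have hcard : P.card = l := by
    have := q.semilength_eq_count_D
    omega
  have hballot : ∀ k : Fin (2*l+1), (P.filter (· ≤ k)).card < (Pᶜ.filter (· ≤ k)).card := by
    intro k
    have hm : k.val ≤ 2*l := by omega
    have hD := count_wordOf e D k.val hm
    have hU := count_wordOf e U k.val hm
    rw [hword] at hD hU
    have hcD := countD_eq P h0 k.val
    have hcU := countU_eq P h0 k.val
    rw [hee] at hcD hcU
    have hq2 := q.count_D_le_count_U k.val
    rw [filter_le_val, filter_le_val]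
    omega
  refine ⟨P, ⟨hcard, hballot⟩, ?_⟩
  ext1
  show wordOf (eP P) = q.toList
  rw [hee, hword]

/-- peak set of a permutation: values sitting at odd positions -/
def peaksOf {l : ℕ} (w : Equiv.Perm (Fin (2*l+1))) : Finset (Fin (2*l+1)) :=
  univ.filter (fun k => (w.symm k).val % 2 = 1)

lemma mem_peaksOf {l : ℕ} (w : Equiv.Perm (Fin (2*l+1))) (k : Fin (2*l+1)) :
    k ∈ peaksOf w ↔ (w.symm k).val % 2 = 1 := by
  simp [peaksOf]

lemma mem_peaksOf_compl {l : ℕ} (w : Equiv.Perm (Fin (2*l+1))) (k : Fin (2*l+1)) :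
    k ∈ (peaksOf w)ᶜ ↔ (w.symm k).val % 2 = 0 := by
  simp only [Finset.mem_compl, mem_peaksOf]
  omega

lemma card_peaksOf {l : ℕ} (w : Equiv.Perm (Fin (2*l+1))) : (peaksOf w).card = l := by
  have himg : peaksOf w
      = (univ : Finset (Fin l)).image (fun i => w ⟨2*i.val+1, by omega⟩) := by
    ext k
    rw [mem_peaksOf]
    simp only [Finset.mem_image, mem_univ, true_and]
    constructor
    · intro hk
      have hlt : (w.symm k).val < 2*l+1 := (w.symm k).isLt
      refine ⟨⟨(w.symm k).val / 2, by omega⟩, ?_⟩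
      have : (⟨2*((w.symm k).val / 2)+1, by omega⟩ : Fin (2*l+1)) = w.symm k := by
        ext; simp; omega
      rw [this]
      exact w.apply_symm_apply k
    · rintro ⟨i, rfl⟩
      rw [Equiv.symm_apply_apply]
      simp
  rw [himg, Finset.card_image_of_injective _ ?_, Finset.card_univ, Fintype.card_fin]
  intro a b hab
  have := w.injective hab
  have : 2*a.val+1 = 2*b.val+1 := congrArg Fin.val this
  ext
  omega

lemma card_peaksOf_compl {l : ℕ} (w : Equiv.Perm (Fin (2*l+1))) :
    (peaksOf w)ᶜ.card = l + 1 := by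
  rw [Finset.card_compl, card_peaksOf, Fintype.card_fin]
  omega

section goodperm

variable {l : ℕ} {w : Equiv.Perm (Fin (2*l+1))}

lemma no321 (h3 : occ321 w = ∅) {a b c : Fin (2*l+1)} (hab : a < b) (hbc : b < c)
    (hcb : w c < w b) (hba : w b < w a) : False := by
  have : (a, (b, c)) ∈ occ321 w := ⟨hab, hbc, hcb, hba⟩
  rw [h3] at this
  exact this

lemma symm_zero (h0 : w ⟨0, by omega⟩ = ⟨0, by omega⟩) :
    w.symm ⟨0, by omega⟩ = ⟨0, by omega⟩ := by
  exact (Equiv.symm_apply_eq w).mpr h0.symm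

/-- valleys are increasing -/
lemma valleys_mono (hU : UpDown w) (h3 : occ321 w = ∅)
    (h0 : w ⟨0, by omega⟩ = ⟨0, by omega⟩)
    {i j : ℕ} (hj : 2*j ≤ 2*l) (hij : i < j) :
    w ⟨2*i, by omega⟩ < w ⟨2*j, by omega⟩ := by
  rcases lt_trichotomy (w ⟨2*i, by omega⟩) (w ⟨2*j, by omega⟩) with h | h | h
  · exact h
  · exact absurd (w.injective h) (by intro hh; have := congrArg Fin.val hh; simp at this; omega)
  · exfalso
    rcases Nat.eq_zero_or_pos i with rfl | hi
    · have h00 : w ⟨2*0, by omega⟩ = ⟨0, by omega⟩ := h0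
      rw [h00] at h
      exact absurd h (by simp [Fin.lt_def])
    · obtain ⟨m, rfl⟩ : ∃ m, i = m + 1 := ⟨i - 1, by omega⟩
      have hUp := hU (2*m+1) (by omega)
      rw [if_neg (by omega)] at hUp
      exact no321 h3 (a := ⟨2*m+1, by omega⟩) (b := ⟨2*(m+1), by omega⟩) (c := ⟨2*j, by omega⟩)
        (Fin.mk_lt_mk.mpr (by omega)) (Fin.mk_lt_mk.mpr (by omega)) h hUp

/-- peaks are increasing -/
lemma peaks_mono (hU : UpDown w) (h3 : occ321 w = ∅)
    {i j : ℕ} (hj : 2*j+1 ≤ 2*l) (hij : i < j) :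
    w ⟨2*i+1, by omega⟩ < w ⟨2*j+1, by omega⟩ := by
  have hj2 : 2*j+2 ≤ 2*l := by omega
  rcases lt_trichotomy (w ⟨2*i+1, by omega⟩) (w ⟨2*j+1, by omega⟩) with h | h | h
  · exact h
  · exact absurd (w.injective h) (by intro hh; have := congrArg Fin.val hh; simp at this; omega)
  · exfalso
    have hUp := hU (2*j+1) (by omega)
    rw [if_neg (by omega)] at hUp
    exact no321 h3 (a := ⟨2*i+1, by omega⟩) (b := ⟨2*j+1, by omega⟩) (c := ⟨2*j+1+1, by omega⟩)
      (Fin.mk_lt_mk.mpr (by omega)) (Fin.mk_lt_mk.mpr (by omega)) hUp h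

end goodperm

section goodperm2

variable {l : ℕ} {w : Equiv.Perm (Fin (2*l+1))}

lemma ballot_peaksOf (hU : UpDown w) (h3 : occ321 w = ∅)
    (h0 : w ⟨0, by omega⟩ = ⟨0, by omega⟩) : IsBallot (peaksOf w) := by
  refine ⟨card_peaksOf w, fun k => ?_⟩
  set P := peaksOf w with hP
  have h0mem : (⟨0, by omega⟩ : Fin (2*l+1)) ∈ Pᶜ.filter (· ≤ k) := by
    rw [Finset.mem_filter]
    constructor
    · rw [mem_peaksOf_compl, symm_zero h0]
      rfl
    · simp [Fin.le_def]
  set f : Fin (2*l+1) → Fin (2*l+1) :=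
    fun x => w ⟨min ((w.symm x).val + 1) (2*l), by omega⟩ with hf
  have hfx : ∀ x ∈ P.filter (· ≤ k), ∀ (hb : (w.symm x).val + 1 < 2*l+1),
      f x = w ⟨(w.symm x).val + 1, hb⟩ := by
    intro x hx hb
    have hmk : (⟨min ((w.symm x).val + 1) (2*l), by omega⟩ : Fin (2*l+1))
        = ⟨(w.symm x).val + 1, hb⟩ := by
      simp only [Fin.mk.injEq]
      omega
    simp only [hf]
    rw [hmk]
  have hodd : ∀ x ∈ P.filter (· ≤ k), (w.symm x).val % 2 = 1 := by
    intro x hx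
    rw [Finset.mem_filter, hP, mem_peaksOf] at hx
    exact hx.1
  have hb : ∀ x ∈ P.filter (· ≤ k), (w.symm x).val + 1 < 2*l+1 := by
    intro x hx
    have := hodd x hx
    have := (w.symm x).isLt
    omega
  have hinj : ∀ x ∈ P.filter (· ≤ k), f x ∈ (Pᶜ.filter (· ≤ k)).erase ⟨0, by omega⟩ := by
    intro x hx
    rw [hfx x hx (hb x hx)]
    have hxk : x ≤ k := (Finset.mem_filter.mp hx).2
    have hUp := hU (w.symm x).val (hb x hx)
    rw [if_neg (by have := hodd x hx; omega)] at hUp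
    have hwx : w ⟨(w.symm x).val, by omega⟩ = x := by
      have h6 : (⟨(w.symm x).val, by omega⟩ : Fin (2*l+1)) = w.symm x := rfl
      rw [h6, Equiv.apply_symm_apply]
    rw [hwx] at hUp
    rw [Finset.mem_erase, Finset.mem_filter]
    refine ⟨?_, ?_, le_of_lt (lt_of_lt_of_le hUp hxk)⟩
    · intro heq
      have h5 := (Equiv.apply_eq_iff_eq_symm_apply w).mp heq
      rw [symm_zero h0] at h5
      exact absurd (congrArg Fin.val h5) (by simp)
    · rw [mem_peaksOf_compl, Equiv.symm_apply_apply]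
      have := hodd x hx
      simp
      omega
  have hcard := Finset.card_le_card_of_injOn f hinj ?_
  · rw [Finset.card_erase_of_mem h0mem] at hcard
    have hpos : 0 < (Pᶜ.filter (· ≤ k)).card := Finset.card_pos.mpr ⟨_, h0mem⟩
    omega
  · intro a ha b hb' hab
    rw [hfx a ha (hb a ha), hfx b hb' (hb b hb')] at hab
    have h7 := congrArg Fin.val (w.injective hab)
    simp only [] at h7
    have h8 : w.symm a = w.symm b := Fin.ext (by omega)
    calc a = w (w.symm a) := (Equiv.apply_symm_apply w a).symm
    _ = w (w.symm b) := by rw [h8]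
    _ = b := Equiv.apply_symm_apply w b

/-- identification of values at even positions -/
lemma even_pos_eq (hU : UpDown w) (h3 : occ321 w = ∅)
    (h0 : w ⟨0, by omega⟩ = ⟨0, by omega⟩) (i : Fin (l+1)) :
    w ⟨2*i.val, by omega⟩ = (peaksOf w)ᶜ.orderEmbOfFin (card_peaksOf_compl w) i := by
  have := Finset.orderEmbOfFin_unique (f := fun i : Fin (l+1) => w ⟨2*i.val, by omega⟩)
    (card_peaksOf_compl w) ?_ ?_
  · exact congrFun this i
  · intro x
    rw [mem_peaksOf_compl, Equiv.symm_apply_apply]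
    simp
  · intro a b hab
    exact valleys_mono hU h3 h0 (by omega) hab

/-- identification of values at odd positions -/
lemma odd_pos_eq (hU : UpDown w) (h3 : occ321 w = ∅) (i : Fin l) :
    w ⟨2*i.val+1, by omega⟩ = (peaksOf w).orderEmbOfFin (card_peaksOf w) i := by
  have := Finset.orderEmbOfFin_unique (f := fun i : Fin l => w ⟨2*i.val+1, by omega⟩)
    (card_peaksOf w) ?_ ?_
  · exact congrFun this i
  · intro x
    rw [mem_peaksOf, Equiv.symm_apply_apply]
    simp
  · intro a b hab
    exact peaks_mono hU h3 (by omega) hab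

end goodperm2

lemma orderEmbOfFin_congr {α : Type*} [LinearOrder α] {s t : Finset α} (hst : s = t) {k : ℕ}
    (hs : s.card = k) (ht : t.card = k) (i : Fin k) :
    s.orderEmbOfFin hs i = t.orderEmbOfFin ht i := by subst hst; rfl

section injpart

variable {l : ℕ} {w w' : Equiv.Perm (Fin (2*l+1))}

lemma peaksOf_inj (hU : UpDown w) (h3 : occ321 w = ∅) (h0 : w ⟨0, by omega⟩ = ⟨0, by omega⟩)
    (hU' : UpDown w') (h3' : occ321 w' = ∅) (h0' : w' ⟨0, by omega⟩ = ⟨0, by omega⟩)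
    (h : peaksOf w = peaksOf w') : w = w' := by
  have hcc : (peaksOf w)ᶜ = (peaksOf w')ᶜ := by rw [h]
  apply Equiv.ext
  intro j
  by_cases hpar : j.val % 2 = 0
  · have hj : j = ⟨2*(j.val/2), by omega⟩ := Fin.ext (show j.val = 2*(j.val/2) by omega)
    have e1 := even_pos_eq (w := w) hU h3 h0 ⟨j.val/2, by omega⟩
    have e2 := even_pos_eq (w := w') hU' h3' h0' ⟨j.val/2, by omega⟩
    rw [hj]
    exact e1.trans ((orderEmbOfFin_congr hcc _ _ _).trans e2.symm)
  · have hj : j = ⟨2*(j.val/2)+1, by omega⟩ := Fin.ext (show j.val = 2*(j.val/2)+1 by omega)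
    have e1 := odd_pos_eq (w := w) hU h3 ⟨j.val/2, by omega⟩
    have e2 := odd_pos_eq (w := w') hU' h3' ⟨j.val/2, by omega⟩
    rw [hj]
    exact e1.trans ((orderEmbOfFin_congr h _ _ _).trans e2.symm)

end injpart

section surjpart

variable {l : ℕ}

lemma IsBallot.zeroNotMem {P : Finset (Fin (2*l+1))} (h : IsBallot P) :
    (0 : Fin (2*l+1)) ∉ P := by
  intro h0
  have hb := h.2 0
  have he : Pᶜ.filter (· ≤ (0 : Fin (2*l+1))) = ∅ := by
    ext x
    simp only [Finset.mem_filter, Finset.notMem_empty, iff_false, not_and, Finset.mem_compl]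
    intro hx hx0
    exact hx (by rwa [Fin.le_zero_iff.1 hx0])
  rw [he, Finset.card_empty] at hb
  omega

lemma IsBallot.cardCompl {P : Finset (Fin (2*l+1))} (h : IsBallot P) : Pᶜ.card = l + 1 := by
  rw [Finset.card_compl, h.1, Fintype.card_fin]
  omega

/-- reconstruction of the permutation from a ballot set -/
def permOf (P : Finset (Fin (2*l+1))) (hP : IsBallot P) : Fin (2*l+1) → Fin (2*l+1) :=
  fun j => if h : j.val % 2 = 0 then Pᶜ.orderEmbOfFin hP.cardCompl ⟨j.val/2, by omega⟩
    else P.orderEmbOfFin hP.1 ⟨j.val/2, by omega⟩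

variable {P : Finset (Fin (2*l+1))} (hP : IsBallot P)

lemma permOf_even {j : Fin (2*l+1)} (hj : j.val % 2 = 0) :
    permOf P hP j = Pᶜ.orderEmbOfFin hP.cardCompl ⟨j.val/2, by omega⟩ := dif_pos hj

lemma permOf_odd {j : Fin (2*l+1)} (hj : j.val % 2 = 1) :
    permOf P hP j = P.orderEmbOfFin hP.1 ⟨j.val/2, by have := j.isLt; omega⟩ :=
  dif_neg (by omega)

lemma permOf_lt {p q : Fin (2*l+1)} (hpar : p.val % 2 = q.val % 2) (hpq : p < q) :
    permOf P hP p < permOf P hP q := by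
  by_cases hp : p.val % 2 = 0
  · rw [permOf_even hP (j := p) hp, permOf_even hP (j := q) (by omega)]
    exact (Pᶜ.orderEmbOfFin hP.cardCompl).strictMono
      (Fin.mk_lt_mk.mpr (by have := Fin.lt_def.mp hpq; omega))
  · rw [permOf_odd hP (j := p) (by omega), permOf_odd hP (j := q) (by omega)]
    exact (P.orderEmbOfFin hP.1).strictMono
      (Fin.mk_lt_mk.mpr (by have := Fin.lt_def.mp hpq; omega))

lemma permOf_injective : Function.Injective (permOf P hP) := by
  intro p q hpq
  by_cases hpar : p.val % 2 = q.val % 2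
  · rcases lt_trichotomy p q with h | h | h
    · exact absurd hpq (ne_of_lt (permOf_lt hP hpar h))
    · exact h
    · exact absurd hpq.symm (ne_of_lt (permOf_lt hP hpar.symm h))
  · exfalso
    by_cases hp : p.val % 2 = 0
    · rw [permOf_even hP (j := p) hp, permOf_odd hP (j := q) (by omega)] at hpq
      have h1 := Finset.orderEmbOfFin_mem Pᶜ hP.cardCompl ⟨p.val/2, by omega⟩
      have h2 := Finset.orderEmbOfFin_mem P hP.1 ⟨q.val/2, by have := q.isLt; omega⟩
      rw [hpq] at h1
      exact (Finset.mem_compl.mp h1) h2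
    · rw [permOf_odd hP (j := p) (by omega), permOf_even hP (j := q) (by omega)] at hpq
      have h1 := Finset.orderEmbOfFin_mem Pᶜ hP.cardCompl ⟨q.val/2, by omega⟩
      have h2 := Finset.orderEmbOfFin_mem P hP.1 ⟨p.val/2, by have := p.isLt; omega⟩
      rw [← hpq] at h1
      exact (Finset.mem_compl.mp h1) h2

end surjpart

section surjpart2

variable {l : ℕ}

lemma enum_le_iff {N c : ℕ} (s : Finset (Fin N)) (h : s.card = c) (i : Fin c) (k : Fin N) :
    s.orderEmbOfFin h i ≤ k ↔ i.val < (s.filter (· ≤ k)).card := by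
  constructor
  · intro hle
    have hsub : (Finset.Iic i).image (s.orderEmbOfFin h) ⊆ s.filter (· ≤ k) := by
      intro x hx
      simp only [Finset.mem_image, Finset.mem_Iic] at hx
      obtain ⟨j, hj, rfl⟩ := hx
      exact Finset.mem_filter.2 ⟨s.orderEmbOfFin_mem h j,
        le_trans ((s.orderEmbOfFin h).monotone hj) hle⟩
    have hcard := Finset.card_le_card hsub
    rw [Finset.card_image_of_injective _ (s.orderEmbOfFin h).injective, Fin.card_Iic] at hcard
    omega
  · intro hlt
    by_contra hgt
    push_neg at hgt
    have hsub : s.filter (· ≤ k) ⊆ (Finset.Iio i).image (s.orderEmbOfFin h) := by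
      intro x hx
      rw [Finset.mem_filter] at hx
      have hx1 : x ∈ (s : Set (Fin N)) := hx.1
      rw [← Finset.range_orderEmbOfFin s h] at hx1
      obtain ⟨j, rfl⟩ := hx1
      refine Finset.mem_image.2 ⟨j, Finset.mem_Iio.2 ?_, rfl⟩
      by_contra hji
      push_neg at hji
      exact absurd (le_trans ((s.orderEmbOfFin h).monotone hji) hx.2) (not_le.2 hgt)
    have hcard := Finset.card_le_card hsub
    rw [Finset.card_image_of_injective _ (s.orderEmbOfFin h).injective, Fin.card_Iio] at hcard
    omega

variable {P : Finset (Fin (2*l+1))} (hP : IsBallot P)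

lemma ballot_key {m : ℕ} (hm : m < l) :
    Pᶜ.orderEmbOfFin hP.cardCompl ⟨m+1, by omega⟩ < P.orderEmbOfFin hP.1 ⟨m, hm⟩ := by
  set k := P.orderEmbOfFin hP.1 ⟨m, hm⟩ with hk
  have h1 : P.orderEmbOfFin hP.1 ⟨m, hm⟩ ≤ k := le_rfl
  rw [enum_le_iff] at h1
  have h2 := hP.2 k
  have h1' : m < (P.filter (· ≤ k)).card := h1
  have h3 : (⟨m+1, by omega⟩ : Fin (l+1)).val < (Pᶜ.filter (· ≤ k)).card := by
    show m+1 < _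
    omega
  have h4 := (enum_le_iff Pᶜ hP.cardCompl ⟨m+1, by omega⟩ k).mpr h3
  refine lt_of_le_of_ne h4 ?_
  intro heq
  have hmem1 := Finset.orderEmbOfFin_mem Pᶜ hP.cardCompl ⟨m+1, by omega⟩
  have hmem2 := Finset.orderEmbOfFin_mem P hP.1 ⟨m, hm⟩
  rw [heq] at hmem1
  exact (Finset.mem_compl.mp hmem1) hmem2

lemma ballot_key' {m : ℕ} (hm : m < l) :
    Pᶜ.orderEmbOfFin hP.cardCompl ⟨m, by omega⟩ < P.orderEmbOfFin hP.1 ⟨m, hm⟩ := by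
  refine lt_trans ?_ (ballot_key hP hm)
  exact (Pᶜ.orderEmbOfFin hP.cardCompl).strictMono (Fin.mk_lt_mk.mpr (by omega))

lemma permOf_upDown : UpDown (Equiv.ofBijective (permOf P hP)
    ((Finite.injective_iff_bijective).mp (permOf_injective hP))) := by
  intro i h
  have happ : ∀ j : Fin (2*l+1), (Equiv.ofBijective (permOf P hP)
      ((Finite.injective_iff_bijective).mp (permOf_injective hP))) j = permOf P hP j :=
    fun j => rfl
  by_cases hpar : i % 2 = 0
  · rw [if_pos hpar, happ, happ, permOf_even hP (j := ⟨i, Nat.lt_of_succ_lt h⟩) hpar,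
      permOf_odd hP (j := ⟨i+1, h⟩) (by simp; omega)]
    have hidx : (⟨(⟨i+1, h⟩ : Fin (2*l+1)).val / 2, by have := h; simp; omega⟩ : Fin l)
        = ⟨(⟨i, Nat.lt_of_succ_lt h⟩ : Fin (2*l+1)).val / 2, by simp; omega⟩ := by
      apply Fin.ext
      show (i+1)/2 = i/2
      omega
    rw [hidx]
    have := ballot_key' hP (m := i/2) (by omega)
    convert this using 2
  · rw [if_neg hpar, happ, happ, permOf_even hP (j := ⟨i+1, h⟩) (by simp; omega),
      permOf_odd hP (j := ⟨i, Nat.lt_of_succ_lt h⟩) (by simp; omega)]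
    have hidx : (⟨(⟨i+1, h⟩ : Fin (2*l+1)).val / 2, by simp; omega⟩ : Fin (l+1))
        = ⟨i/2 + 1, by simp; omega⟩ := by
      apply Fin.ext
      show (i+1)/2 = i/2 + 1
      omega
    rw [hidx]
    exact ballot_key hP (by omega)

end surjpart2

section surjpart3

variable {l : ℕ} {P : Finset (Fin (2*l+1))} (hP : IsBallot P)

lemma permOf_occ321 : occ321 (Equiv.ofBijective (permOf P hP)
    ((Finite.injective_iff_bijective).mp (permOf_injective hP))) = ∅ := by
  rw [Set.eq_empty_iff_forall_notMem]
  rintro ⟨a, b, c⟩ ⟨hab, hbc, hcb, hba⟩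
  simp only [Equiv.ofBijective_apply] at hcb hba
  by_cases h1 : a.val % 2 = b.val % 2
  · exact absurd (permOf_lt hP h1 hab) (not_lt.mpr (le_of_lt hba))
  · by_cases h2 : b.val % 2 = c.val % 2
    · exact absurd (permOf_lt hP h2 hbc) (not_lt.mpr (le_of_lt hcb))
    · have h3 : a.val % 2 = c.val % 2 := by omega
      exact absurd (permOf_lt hP h3 (lt_trans hab hbc)) (not_lt.mpr (le_of_lt (lt_trans hcb hba)))

lemma permOf_zero : (Equiv.ofBijective (permOf P hP)
    ((Finite.injective_iff_bijective).mp (permOf_injective hP))) ⟨0, by omega⟩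
    = ⟨0, by omega⟩ := by
  have happ : (Equiv.ofBijective (permOf P hP)
      ((Finite.injective_iff_bijective).mp (permOf_injective hP))) ⟨0, by omega⟩
      = permOf P hP ⟨0, by omega⟩ := rfl
  rw [happ, permOf_even hP (j := ⟨0, by omega⟩) (by simp)]
  have h0V : (⟨0, by omega⟩ : Fin (2*l+1)) ∈ Pᶜ := Finset.mem_compl.mpr hP.zeroNotMem
  have hidx : (⟨(⟨0, by omega⟩ : Fin (2*l+1)).val / 2, by simp⟩ : Fin (l+1)) = ⟨0, by omega⟩ := by
    apply Fin.ext
    show 0/2 = 0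
    rfl
  rw [hidx, Finset.orderEmbOfFin_zero]
  apply le_antisymm
  · exact Finset.min'_le _ _ h0V
  · simp [Fin.le_def]

lemma peaksOf_permOf : peaksOf (Equiv.ofBijective (permOf P hP)
    ((Finite.injective_iff_bijective).mp (permOf_injective hP))) = P := by
  set w := Equiv.ofBijective (permOf P hP)
    ((Finite.injective_iff_bijective).mp (permOf_injective hP)) with hw
  ext k
  rw [mem_peaksOf]
  have happ : permOf P hP (w.symm k) = k := w.apply_symm_apply k
  constructor
  · intro hodd
    rw [permOf_odd hP (j := w.symm k) hodd] at happ
    rw [← happ]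
    exact Finset.orderEmbOfFin_mem _ _ _
  · intro hk
    by_contra hev
    rw [permOf_even hP (j := w.symm k) (by omega)] at happ
    have := Finset.orderEmbOfFin_mem Pᶜ hP.cardCompl
      ⟨(w.symm k).val / 2, by have := (w.symm k).isLt; omega⟩
    rw [happ] at this
    exact (Finset.mem_compl.mp this) hk

end surjpart3

end Aux

theorem stmt10 (l : ℕ) (hl : 1 ≤ l) :
    Nat.card {w : Equiv.Perm (Fin (2 * l + 1)) // UpDown w ∧ occ321 w = ∅ ∧
        w ⟨0, by omega⟩ = ⟨0, by omega⟩} = catalan l := by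
  have h1 : Nat.card {w : Equiv.Perm (Fin (2 * l + 1)) // UpDown w ∧ occ321 w = ∅ ∧
        w ⟨0, by omega⟩ = ⟨0, by omega⟩}
      = Nat.card {P : Finset (Fin (2*l+1)) // IsBallot P} := by
    apply Nat.card_eq_of_bijective
      (fun w => ⟨peaksOf w.1, ballot_peaksOf w.2.1 w.2.2.1 w.2.2.2⟩)
    constructor
    · rintro ⟨w, hw⟩ ⟨w', hw'⟩ h
      exact Subtype.ext
        (peaksOf_inj hw.1 hw.2.1 hw.2.2 hw'.1 hw'.2.1 hw'.2.2 (congrArg Subtype.val h))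
    · rintro ⟨Q, hQ⟩
      exact ⟨⟨Equiv.ofBijective (permOf Q hQ)
          ((Finite.injective_iff_bijective).mp (permOf_injective hQ)),
        permOf_upDown hQ, permOf_occ321 hQ, permOf_zero hQ⟩,
        Subtype.ext (peaksOf_permOf hQ)⟩
  have h2 : Nat.card {P : Finset (Fin (2*l+1)) // IsBallot P}
      = Nat.card {q : DyckWord // q.semilength = l} := by
    apply Nat.card_eq_of_bijective
      (fun P => ⟨toDyck P.1 P.2, semilength_toDyck P.1 P.2⟩)
    constructor
    · rintro ⟨P, hP⟩ ⟨P', hP'⟩ h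
      exact Subtype.ext (toDyck_injective P P' hP hP' (congrArg Subtype.val h))
    · rintro ⟨q, hq⟩
      obtain ⟨P, hPb, hPq⟩ := toDyck_surjective q hq
      exact ⟨⟨P, hPb⟩, Subtype.ext hPq⟩
  rw [h1, h2, Nat.card_eq_fintype_card, DyckWord.card_dyckWord_semilength_eq_catalan]
end
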